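/- arXiv:1609.06792 — 6 statements merged into one kernel-verified Lean document; each statement's English description precedes it below -/
import Mathlib

section
/- For the linear advection equation u_t + u_x = 0 on a periodic domain, the semi-discrete central DG scheme with dissipation satisfies the energy decay identity: (1/2) d/dt ∫_Ω ((u_h^C)² + (u_h^D)²) dx = −(1/τ_max) ∫_Ω (u_h^C − u_h^D)² dx ≤ 0. -/
open intervalIntegral

section CDGHelpers

open MeasureTheory intervalIntegral Set

lemma cdg_ae_Ioo {a b : ℝ} (hab : a ≤ b) {f g : ℝ → ℝ}
    (hfg : ∀ x ∈ Set.Ioo a b, f x = g x) :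
    ∀ᵐ x : ℝ, x ∈ Set.uIoc a b → f x = g x := by
  have hb : ∀ᵐ x : ℝ, x ≠ b := by
    rw [MeasureTheory.ae_iff]
    simpa using measure_singleton b
  filter_upwards [hb] with x hx hxI
  rw [Set.uIoc_of_le hab] at hxI
  exact hfg x ⟨hxI.1, lt_of_le_of_ne hxI.2 hx⟩

lemma cdg_integral_congr_Ioo {a b : ℝ} (hab : a ≤ b) {f g : ℝ → ℝ}
    (hfg : ∀ x ∈ Set.Ioo a b, f x = g x) :
    ∫ x in a..b, f x = ∫ x in a..b, g x :=
  intervalIntegral.integral_congr_ae (cdg_ae_Ioo hab hfg)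

lemma cdg_integrable_of_Ioo {a b : ℝ} (hab : a ≤ b) {f g : ℝ → ℝ} (hg : Continuous g)
    (hfg : ∀ x ∈ Set.Ioo a b, f x = g x) : IntervalIntegrable f volume a b := by
  have h1 : IntervalIntegrable g volume a b := hg.intervalIntegrable a b
  rw [intervalIntegrable_iff] at h1 ⊢
  refine h1.congr ?_
  have := cdg_ae_Ioo hab (fun x hx => (hfg x hx).symm)
  rw [Filter.EventuallyEq, MeasureTheory.ae_restrict_iff' measurableSet_uIoc]
  exact this

lemma cdg_polyIBP (P Q : Polynomial ℝ) (a b : ℝ) :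
    ∫ x in a..b, P.eval x * Q.derivative.eval x
      = P.eval b * Q.eval b - P.eval a * Q.eval a
        - ∫ x in a..b, P.derivative.eval x * Q.eval x := by
  have h : ∀ x ∈ Set.uIcc a b, HasDerivAt (fun y => P.eval y * Q.eval y)
      (P.derivative.eval x * Q.eval x + P.eval x * Q.derivative.eval x) x :=
    fun x _ => (P.hasDerivAt x).mul (Q.hasDerivAt x)
  have hint : IntervalIntegrable
      (fun x => P.derivative.eval x * Q.eval x + P.eval x * Q.derivative.eval x) volume a b :=
    ((P.derivative.continuous.mul Q.continuous).add
      (P.continuous.mul Q.derivative.continuous)).intervalIntegrable a b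
  have := intervalIntegral.integral_eq_sub_of_hasDerivAt h hint
  rw [intervalIntegral.integral_add (f := fun x => P.derivative.eval x * Q.eval x) (g := fun x => P.eval x * Q.derivative.eval x)
      ((P.derivative.continuous.mul Q.continuous).intervalIntegrable a b)
      ((P.continuous.mul Q.derivative.continuous).intervalIntegrable a b)] at this
  linarith

open MeasureTheory intervalIntegral Set Polynomial

lemma cdg_momentBound (K : ℕ) (a b : ℝ) (hab : a < b) :
    ∃ C : ℝ, 0 ≤ C ∧ ∀ q : Polynomial ℝ, q.natDegree ≤ K →
      (∫ x in a..b, (q.eval x)^2)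
        ≤ C * ∑ i ∈ Finset.range (K+1), (∫ x in a..b, q.eval x * x^i)^2 := by
  classical
  set n := K + 1 with hn
  set G : Matrix (Fin n) (Fin n) ℝ := fun i j => ∫ x in a..b, x ^ ((i:ℕ) + (j:ℕ)) with hG
  have hTc : ∀ (c : Fin n → ℝ) (i : Fin n),
      G.mulVec c i = ∫ x in a..b, (∑ j : Fin n, c j * x ^ (j:ℕ)) * x ^ (i:ℕ) := by
    intro c i
    have heq : (fun x : ℝ => (∑ j : Fin n, c j * x ^ (j:ℕ)) * x ^ (i:ℕ))
        = fun x : ℝ => ∑ j : Fin n, c j * x ^ ((i:ℕ) + (j:ℕ)) := by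
      funext x
      rw [Finset.sum_mul]
      refine Finset.sum_congr rfl fun j _ => ?_
      ring
    rw [heq, intervalIntegral.integral_finset_sum]
    · simp only [Matrix.mulVec, dotProduct, hG]
      refine Finset.sum_congr rfl fun j _ => ?_
      rw [intervalIntegral.integral_const_mul]
      ring
    · intro j _
      exact (continuous_const.mul (continuous_pow _)).intervalIntegrable a b
  -- injectivity of the Gram map
  have hinj : Function.Injective (G.mulVecLin) := by
    rw [← LinearMap.ker_eq_bot, LinearMap.ker_eq_bot']
    intro c hc
    have hc' : ∀ i : Fin n, G.mulVec c i = 0 := fun i => congrFun hc i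
    set P : Polynomial ℝ := ∑ j : Fin n, Polynomial.C (c j) * Polynomial.X ^ (j:ℕ) with hP
    have hPeval : ∀ x : ℝ, P.eval x = ∑ j : Fin n, c j * x ^ (j:ℕ) := by
      intro x; simp [hP, Polynomial.eval_finset_sum]
    have hint0 : ∫ x in a..b, (P.eval x)^2 = 0 := by
      have h1 : (fun x : ℝ => (P.eval x)^2)
          = fun x => ∑ j : Fin n, c j * ((∑ k : Fin n, c k * x ^ (k:ℕ)) * x ^ (j:ℕ)) := by
        funext x
        rw [sq]
        nth_rewrite 2 [hPeval x]
        rw [hPeval x, Finset.mul_sum]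
        refine Finset.sum_congr rfl fun j _ => ?_
        ring
      rw [h1, intervalIntegral.integral_finset_sum]
      · refine Finset.sum_eq_zero fun j _ => ?_
        rw [intervalIntegral.integral_const_mul, ← hTc c j, hc' j, mul_zero]
      · intro j _
        refine Continuous.intervalIntegrable ?_ a b
        exact continuous_const.mul ((continuous_finset_sum _ fun k _ =>
          continuous_const.mul (continuous_pow _)).mul (continuous_pow _))
    have hP0 : P = 0 := by
      by_contra hne
      have hroots : (volume {x : ℝ | P.IsRoot x}) = 0 :=
        (Polynomial.finite_setOf_isRoot hne).measure_zero _
      have hInt : IntegrableOn (fun x => (P.eval x)^2) (Set.Ioc a b) volume := by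
        rw [← intervalIntegrable_iff_integrableOn_Ioc_of_le hab.le]
        exact (P.continuous.pow 2).intervalIntegrable a b
      have hae : (fun x => (P.eval x)^2) =ᵐ[volume.restrict (Set.Ioc a b)] 0 := by
        rw [← MeasureTheory.integral_eq_zero_iff_of_nonneg (fun x => sq_nonneg _) hInt]
        rw [← intervalIntegral.integral_of_le hab.le]
        exact hint0
      have hsub : Set.Ioc a b ⊆ {x : ℝ | P.IsRoot x} ∪ {x : ℝ | ¬ ((P.eval x)^2 = 0)} := by
        intro x _
        by_cases hx : P.eval x = 0
        · exact Or.inl hx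
        · exact Or.inr (by simpa using pow_ne_zero 2 hx)
      have hnull : volume ({x : ℝ | ¬ ((P.eval x)^2 = 0)} ∩ Set.Ioc a b) = 0 := by
        have hmeas : MeasurableSet {x : ℝ | ¬ ((P.eval x)^2 = 0)} :=
          ((P.continuous.pow 2).measurable (measurableSet_singleton 0)).compl
        have h2 : ∀ᵐ x ∂(volume.restrict (Set.Ioc a b)), (P.eval x)^2 = 0 := by
          filter_upwards [hae] with x hx using hx
        rw [MeasureTheory.ae_iff] at h2
        rw [MeasureTheory.Measure.restrict_apply hmeas] at h2
        exact h2
      have hle : volume (Set.Ioc a b)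
          ≤ volume {x : ℝ | P.IsRoot x}
            + volume ({x : ℝ | ¬ ((P.eval x)^2 = 0)} ∩ Set.Ioc a b) := by
        refine le_trans (measure_mono ?_) (measure_union_le _ _)
        intro x hx
        rcases hsub hx with h | h
        · exact Or.inl h
        · exact Or.inr ⟨h, hx⟩
      rw [hroots, hnull, add_zero] at hle
      have : volume (Set.Ioc a b) = 0 := le_antisymm hle zero_le
      rw [Real.volume_Ioc] at this
      simp [ENNReal.ofReal_eq_zero, sub_nonpos] at this
      linarith
    have hcz : ∀ j : Fin n, c j = 0 := by
      intro j
      have hco : P.coeff (j:ℕ) = c j := by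
        rw [hP, Polynomial.finset_sum_coeff]
        rw [Finset.sum_eq_single j
          (fun k _ hk => by
            have hne2 : (k:ℕ) ≠ (j:ℕ) := fun hkj => hk (Fin.ext hkj)
            rw [Polynomial.coeff_C_mul, Polynomial.coeff_X_pow, if_neg (fun hh => hne2 hh.symm), mul_zero])
          (fun hj => absurd (Finset.mem_univ j) hj)]
        simp
      rw [← hco, hP0, Polynomial.coeff_zero]
    funext j; exact hcz j
  -- inverse bound
  let E := LinearEquiv.ofBijective G.mulVecLin
    ⟨hinj, (LinearMap.injective_iff_surjective).mp hinj⟩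
  let L := LinearMap.toContinuousLinearMap (E.symm.toLinearMap)
  have hLb : ∀ y : Fin n → ℝ, ‖E.symm y‖ ≤ ‖L‖ * ‖y‖ := by
    intro y
    have := L.le_opNorm y
    exact this
  refine ⟨(n : ℝ) * ‖L‖, by positivity, ?_⟩
  intro q hq
  set c : Fin n → ℝ := fun i => q.coeff i with hcdef
  have hqe : ∀ x : ℝ, q.eval x = ∑ j : Fin n, c j * x ^ (j:ℕ) := by
    intro x
    rw [Polynomial.eval_eq_sum_range' (lt_of_le_of_lt hq (Nat.lt_succ_self K)) x]
    rw [← Fin.sum_univ_eq_sum_range (fun i => q.coeff i * x ^ i) n]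
  set M : Fin n → ℝ := G.mulVec c with hMdef
  have hM : ∀ i : Fin n, M i = ∫ x in a..b, q.eval x * x ^ (i:ℕ) := by
    intro i
    rw [hMdef, hTc]
    congr 1
    funext x
    rw [hqe x]
  have hEc : E.symm M = c := by
    have : E c = M := by
      show G.mulVecLin c = M
      rw [Matrix.mulVecLin_apply]
    rw [← this, LinearEquiv.symm_apply_apply]
  have key1 : ∫ x in a..b, (q.eval x)^2 = ∑ i : Fin n, c i * M i := by
    have h1 : (fun x : ℝ => (q.eval x)^2)
        = fun x => ∑ j : Fin n, c j * (q.eval x * x ^ (j:ℕ)) := by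
      funext x
      rw [sq]
      nth_rewrite 2 [hqe x]
      rw [Finset.mul_sum]
      refine Finset.sum_congr rfl fun j _ => ?_
      ring
    rw [h1, intervalIntegral.integral_finset_sum]
    · refine Finset.sum_congr rfl fun j _ => ?_
      rw [intervalIntegral.integral_const_mul, hM j]
    · intro j _
      exact (continuous_const.mul (q.continuous.mul (continuous_pow _))).intervalIntegrable a b
  have hMsq : ‖M‖^2 ≤ ∑ i : Fin n, (M i)^2 := by
    have hnn : (0:ℝ) ≤ ∑ i : Fin n, (M i)^2 := Finset.sum_nonneg fun i _ => sq_nonneg _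
    have h1 : ‖M‖ ≤ Real.sqrt (∑ i : Fin n, (M i)^2) := by
      rw [pi_norm_le_iff_of_nonneg (Real.sqrt_nonneg _)]
      intro i
      rw [Real.norm_eq_abs, ← Real.sqrt_sq_eq_abs]
      exact Real.sqrt_le_sqrt (Finset.single_le_sum (fun j _ => sq_nonneg (M j))
        (Finset.mem_univ i))
    calc ‖M‖^2 ≤ (Real.sqrt (∑ i : Fin n, (M i)^2))^2 := by
          exact pow_le_pow_left₀ (norm_nonneg _) h1 2
      _ = ∑ i : Fin n, (M i)^2 := Real.sq_sqrt hnn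
  have hsum_eq : ∑ i : Fin n, (M i)^2
      = ∑ i ∈ Finset.range (K+1), (∫ x in a..b, q.eval x * x^i)^2 := by
    rw [← Fin.sum_univ_eq_sum_range (fun i => (∫ x in a..b, q.eval x * x^i)^2) n]
    exact Finset.sum_congr rfl fun i _ => by rw [hM i]
  have hcM : ‖c‖ ≤ ‖L‖ * ‖M‖ := by rw [← hEc]; exact hLb M
  have step1 : ∑ i : Fin n, c i * M i ≤ (n:ℝ) * (‖c‖ * ‖M‖) := by
    calc ∑ i : Fin n, c i * M i ≤ ∑ i : Fin n, ‖c‖ * ‖M‖ := by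
          refine Finset.sum_le_sum fun i _ => ?_
          calc c i * M i ≤ |c i * M i| := le_abs_self _
            _ = |c i| * |M i| := abs_mul _ _
            _ ≤ ‖c‖ * ‖M‖ := by
                refine mul_le_mul ?_ ?_ (abs_nonneg _) (norm_nonneg _)
                · exact (Real.norm_eq_abs (c i)) ▸ norm_le_pi_norm c i
                · exact (Real.norm_eq_abs (M i)) ▸ norm_le_pi_norm M i
      _ = (n:ℝ) * (‖c‖ * ‖M‖) := by
          rw [Finset.sum_const, Finset.card_univ, Fintype.card_fin]
          simp [nsmul_eq_mul]
  have hLnn : (0:ℝ) ≤ ‖L‖ := norm_nonneg _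
  have hMnn : (0:ℝ) ≤ ‖M‖ := norm_nonneg _
  calc ∫ x in a..b, (q.eval x)^2 = ∑ i : Fin n, c i * M i := key1
    _ ≤ (n:ℝ) * (‖c‖ * ‖M‖) := step1
    _ ≤ (n:ℝ) * ((‖L‖ * ‖M‖) * ‖M‖) := by
        refine mul_le_mul_of_nonneg_left (mul_le_mul_of_nonneg_right hcM hMnn) (by positivity)
    _ = ((n:ℝ) * ‖L‖) * ‖M‖^2 := by ring
    _ ≤ ((n:ℝ) * ‖L‖) * ∑ i : Fin n, (M i)^2 := by
        refine mul_le_mul_of_nonneg_left hMsq (by positivity)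
    _ = ((n:ℝ) * ‖L‖) * ∑ i ∈ Finset.range (K+1), (∫ x in a..b, q.eval x * x^i)^2 := by
        rw [hsum_eq]
lemma cdg_cell_energy_deriv (K : ℕ) {a b : ℝ} (hab : a < b) (u : ℝ → ℝ → ℝ) (t : ℝ)
    (hpoly : ∀ s : ℝ, ∃ q : Polynomial ℝ, q.natDegree ≤ K ∧ ∀ x ∈ Set.Ioo a b, u s x = q.eval x)
    (D : Polynomial ℝ → ℝ)
    (hD : ∀ p : Polynomial ℝ, p.natDegree ≤ K →
      HasDerivAt (fun s => ∫ x in a..b, u s x * p.eval x) (D p) t)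
    (qt : Polynomial ℝ) (hqt : qt.natDegree ≤ K)
    (hqteq : ∀ x ∈ Set.Ioo a b, u t x = qt.eval x) :
    HasDerivAt (fun s => ∫ x in a..b, (u s x)^2) (2 * D qt) t := by
  classical
  obtain ⟨C, hC0, hC⟩ := cdg_momentBound K a b hab
  set R : ℝ → ℝ := fun s => ∫ x in a..b, (u s x - qt.eval x)^2 with hRdef
  set Gf : ℝ → ℝ := fun s => ∫ x in a..b, u s x * qt.eval x with hGdef
  set c0 : ℝ := ∫ x in a..b, (qt.eval x)^2 with hc0def
  -- decomposition
  have stepA : ∀ s : ℝ, (∫ x in a..b, (u s x)^2) = R s + (2 * Gf s - c0) := by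
    intro s
    obtain ⟨q, hqK, hq⟩ := hpoly s
    have I1 : IntervalIntegrable (fun x => (u s x - qt.eval x)^2) volume a b :=
      cdg_integrable_of_Ioo hab.le ((q.continuous.sub qt.continuous).pow 2)
        (fun x hx => by rw [hq x hx]; rfl)
    have I2 : IntervalIntegrable (fun x => u s x * qt.eval x) volume a b :=
      cdg_integrable_of_Ioo hab.le (q.continuous.mul qt.continuous)
        (fun x hx => by rw [hq x hx]; rfl)
    have I3 : IntervalIntegrable (fun x => (qt.eval x)^2) volume a b :=
      (qt.continuous.pow 2).intervalIntegrable a b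
    have hpt : (fun x => (u s x)^2)
        = fun x => (u s x - qt.eval x)^2 + (2 * (u s x * qt.eval x) - (qt.eval x)^2) := by
      funext x; ring
    rw [hpt, intervalIntegral.integral_add I1 ((I2.const_mul 2).sub I3),
      intervalIntegral.integral_sub (I2.const_mul 2) I3,
      intervalIntegral.integral_const_mul]
  -- moments
  set Pm : ℕ → ℝ → ℝ := fun i s => ∫ x in a..b, u s x * x ^ i with hPmdef
  have hPm : ∀ i, i ≤ K → HasDerivAt (Pm i) (D (Polynomial.X ^ i)) t := by
    intro i hi
    have h1 := hD (Polynomial.X ^ i) (le_trans (Polynomial.natDegree_X_pow_le i) hi)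
    have h2 : (fun s => ∫ x in a..b, u s x * (Polynomial.X ^ i : Polynomial ℝ).eval x)
        = Pm i := by
      funext s; simp [hPmdef]
    rwa [h2] at h1
  have hRt : R t = 0 := by
    have : R t = ∫ x in a..b, (0:ℝ) :=
      cdg_integral_congr_Ioo hab.le (fun x hx => by rw [hqteq x hx]; ring)
    simpa using this
  have hRnn : ∀ s, 0 ≤ R s :=
    fun s => intervalIntegral.integral_nonneg hab.le (fun x _ => sq_nonneg _)
  have hRb : ∀ s, R s ≤ C * ∑ i ∈ Finset.range (K+1), (Pm i s - Pm i t)^2 := by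
    intro s
    obtain ⟨q, hqK, hq⟩ := hpoly s
    have hrK : (q - qt).natDegree ≤ K :=
      le_trans (Polynomial.natDegree_sub_le q qt) (max_le hqK hqt)
    have hR1 : R s = ∫ x in a..b, ((q - qt).eval x)^2 :=
      cdg_integral_congr_Ioo hab.le (fun x hx => by
        rw [hq x hx, Polynomial.eval_sub])
    have hmom : ∀ i : ℕ, (∫ x in a..b, (q - qt).eval x * x ^ i) = Pm i s - Pm i t := by
      intro i
      have e1 : (∫ x in a..b, (q - qt).eval x * x ^ i)
          = ∫ x in a..b, (u s x * x ^ i - u t x * x ^ i) :=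
        cdg_integral_congr_Ioo hab.le (fun x hx => by
          rw [Polynomial.eval_sub, hq x hx, hqteq x hx]; ring)
      rw [e1, intervalIntegral.integral_sub
        (cdg_integrable_of_Ioo hab.le (q.continuous.mul (continuous_pow i))
          (fun x hx => by rw [hq x hx]; rfl))
        (cdg_integrable_of_Ioo hab.le (qt.continuous.mul (continuous_pow i))
          (fun x hx => by rw [hqteq x hx]; rfl))]
    rw [hR1]
    calc ∫ x in a..b, ((q - qt).eval x)^2
        ≤ C * ∑ i ∈ Finset.range (K+1), (∫ x in a..b, (q - qt).eval x * x^i)^2 := hC _ hrK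
      _ = C * ∑ i ∈ Finset.range (K+1), (Pm i s - Pm i t)^2 := by
          congr 1
          exact Finset.sum_congr rfl fun i _ => by rw [hmom i]
  -- littleo
  have hterm : ∀ i ∈ Finset.range (K+1),
      (fun s => (Pm i s - Pm i t)^2) =o[nhds t] fun s => s - t := by
    intro i hi
    have hP := hPm i (Nat.lt_succ_iff.mp (Finset.mem_range.mp hi))
    have hO : (fun s => Pm i s - Pm i t) =O[nhds t] fun s => s - t :=
      hP.hasFDerivAt.isBigO_sub
    have hsq : (fun s => (Pm i s - Pm i t)^2) =O[nhds t] fun s => (s - t) * (s - t) := by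
      simpa [sq] using hO.mul hO
    refine hsq.trans_isLittleO ?_
    have h1 : (fun s : ℝ => s - t) =o[nhds t] (fun _ => (1:ℝ)) :=
      (Asymptotics.isLittleO_one_iff ℝ).2
        ((continuous_id.sub continuous_const).tendsto' t 0 (by simp))
    simpa using h1.mul_isBigO (Asymptotics.isBigO_refl (fun s : ℝ => s - t) (nhds t))
  have hsum : (fun s => ∑ i ∈ Finset.range (K+1), (Pm i s - Pm i t)^2)
      =o[nhds t] fun s => s - t := Asymptotics.IsLittleO.fun_sum hterm
  have hRO : R =O[nhds t]
      (fun s => ∑ i ∈ Finset.range (K+1), (Pm i s - Pm i t)^2) := by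
    refine Asymptotics.IsBigO.of_bound C (Filter.Eventually.of_forall fun s => ?_)
    have hsnn : (0:ℝ) ≤ ∑ i ∈ Finset.range (K+1), (Pm i s - Pm i t)^2 :=
      Finset.sum_nonneg fun i _ => sq_nonneg _
    rw [Real.norm_eq_abs, Real.norm_eq_abs, abs_of_nonneg (hRnn s), abs_of_nonneg hsnn]
    exact hRb s
  have hlo : R =o[nhds t] fun s => s - t := hRO.trans_isLittleO hsum
  have hd : HasDerivAt R 0 t := by
    rw [hasDerivAt_iff_isLittleO]
    simpa [hRt] using hlo
  have hG : HasDerivAt Gf (D qt) t := hD qt hqt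
  have hfinal : HasDerivAt (fun s => R s + (2 * Gf s - c0)) (0 + 2 * D qt) t :=
    hd.add ((hG.const_mul 2).sub_const c0)
  have hfe : (fun s => ∫ x in a..b, (u s x)^2) = fun s => R s + (2 * Gf s - c0) :=
    funext stepA
  rw [hfe]
  simpa using hfinal

lemma cdg_comm (a b : ℝ) (f g : ℝ → ℝ) :
    ∫ x in a..b, f x * g x = ∫ x in a..b, g x * f x :=
  intervalIntegral.integral_congr fun x _ => mul_comm _ _

end CDGHelpers

set_option maxHeartbeats 1600000 in
/-- Energy decay identity for the semi-discrete central DG scheme applied to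
`u_t + u_x = 0` on a periodic domain `[0, N·h]`.  The two piecewise-polynomial
(degree ≤ K) approximations `uC`, `uD` live on mutually dual uniform meshes and
satisfy the semi-discrete weak formulations against all polynomial test
functions; then `(1/2) d/dt ∫_Ω ((u_h^C)² + (u_h^D)²) = -(1/τ) ∫_Ω (u_h^C - u_h^D)² ≤ 0`. -/
theorem central_dg_energy_decay
    (K N : ℕ) (hN : 0 < N) (h τ : ℝ) (hh : 0 < h) (hτ : 0 < τ)
    (uC uD : ℝ → ℝ → ℝ) (t : ℝ)
    -- spatial periodicity with period N·h
    (hperC : ∀ s x, uC s (x + N * h) = uC s x)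
    (hperD : ∀ s x, uD s (x + N * h) = uD s x)
    -- piecewise polynomial of degree ≤ K on the primal cells C_j = (j·h, (j+1)·h)
    (hpolyC : ∀ s : ℝ, ∀ j : ℤ, ∃ q : Polynomial ℝ, q.natDegree ≤ K ∧
      ∀ x ∈ Set.Ioo ((j : ℝ) * h) ((j + 1 : ℝ) * h), uC s x = q.eval x)
    -- piecewise polynomial of degree ≤ K on the dual cells D_{j+1/2} = ((j+1/2)·h, (j+3/2)·h)
    (hpolyD : ∀ s : ℝ, ∀ j : ℤ, ∃ q : Polynomial ℝ, q.natDegree ≤ K ∧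
      ∀ x ∈ Set.Ioo (((j : ℝ) + 1 / 2) * h) (((j : ℝ) + 3 / 2) * h), uD s x = q.eval x)
    -- semi-discrete CDG scheme for uC (flux f(u) = u), tested against every
    -- polynomial of degree ≤ K on each primal cell
    (hschemeC : ∀ j : ℤ, ∀ p : Polynomial ℝ, p.natDegree ≤ K →
      HasDerivAt (fun s => ∫ x in ((j : ℝ) * h)..((j + 1 : ℝ) * h), uC s x * p.eval x)
        ((1 / τ) * (∫ x in ((j : ℝ) * h)..((j + 1 : ℝ) * h), (uD t x - uC t x) * p.eval x)
          + (∫ x in ((j : ℝ) * h)..((j + 1 : ℝ) * h), uD t x * (p.derivative.eval x))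
          - uD t ((j + 1 : ℝ) * h) * p.eval ((j + 1 : ℝ) * h)
          + uD t ((j : ℝ) * h) * p.eval ((j : ℝ) * h)) t)
    -- semi-discrete CDG scheme for uD on the dual cells
    (hschemeD : ∀ j : ℤ, ∀ p : Polynomial ℝ, p.natDegree ≤ K →
      HasDerivAt (fun s => ∫ x in (((j : ℝ) + 1 / 2) * h)..(((j : ℝ) + 3 / 2) * h),
          uD s x * p.eval x)
        ((1 / τ) * (∫ x in (((j : ℝ) + 1 / 2) * h)..(((j : ℝ) + 3 / 2) * h),
            (uC t x - uD t x) * p.eval x)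
          + (∫ x in (((j : ℝ) + 1 / 2) * h)..(((j : ℝ) + 3 / 2) * h),
            uC t x * (p.derivative.eval x))
          - uC t (((j : ℝ) + 3 / 2) * h) * p.eval (((j : ℝ) + 3 / 2) * h)
          + uC t (((j : ℝ) + 1 / 2) * h) * p.eval (((j : ℝ) + 1 / 2) * h)) t) :
    HasDerivAt
      (fun s => (1 / 2) * ∫ x in (0 : ℝ)..(N * h), ((uC s x) ^ 2 + (uD s x) ^ 2))
      (-(1 / τ) * ∫ x in (0 : ℝ)..(N * h), (uC t x - uD t x) ^ 2) t
    ∧ -(1 / τ) * (∫ x in (0 : ℝ)..(N * h), (uC t x - uD t x) ^ 2) ≤ 0 := by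
  classical
  constructor
  · -- the derivative identity
    choose qCf hqCdeg hqCeq using hpolyC
    choose qDf hqDdeg hqDeq using hpolyD
    set qC : ℤ → Polynomial ℝ := qCf t with hqC
    set qD : ℤ → Polynomial ℝ := qDf t with hqD
    -- interior point facts
    have hyin : ∀ j : ℤ, ((j:ℝ) + 1/2) * h ∈ Set.Ioo ((j:ℝ) * h) (((j:ℝ) + 1) * h) := by
      intro j; constructor <;> nlinarith
    have hx1in : ∀ j : ℤ, ((j:ℝ) + 1) * h ∈ Set.Ioo (((j:ℝ) + 1/2) * h) (((j:ℝ) + 3/2) * h) := by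
      intro j; constructor <;> nlinarith
    have huCy : ∀ j : ℤ, uC t (((j:ℝ) + 1/2) * h) = (qC j).eval (((j:ℝ) + 1/2) * h) :=
      fun j => hqCeq t j _ (hyin j)
    have huDx1 : ∀ j : ℤ, uD t (((j:ℝ) + 1) * h) = (qD j).eval (((j:ℝ) + 1) * h) :=
      fun j => hqDeq t j _ (hx1in j)
    have huDx : ∀ j : ℤ, uD t ((j:ℝ) * h) = (qD (j-1)).eval ((j:ℝ) * h) := by
      intro j
      have := hqDeq t (j-1) ((j:ℝ) * h) (by
        constructor <;> · push_cast; nlinarith)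
      exact this
    -- piecewise descriptions on half cells
    have hHalfC : ∀ (s : ℝ) (k : ℕ), ∃ p : Polynomial ℝ,
        ∀ x ∈ Set.Ioo ((k:ℝ) * (h/2)) (((k:ℝ) + 1) * (h/2)), uC s x = p.eval x := by
      intro s k
      set i := k / 2 with hidef
      refine ⟨qCf s (i : ℤ), fun x hx => hqCeq s _ x ?_⟩
      have h1 : 2 * i ≤ k := by omega
      have h2 : k ≤ 2 * i + 1 := by omega
      have h01 : 2 * (i:ℝ) ≤ (k:ℝ) := by exact_mod_cast h1
      have h02 : (k:ℝ) ≤ 2 * (i:ℝ) + 1 := by exact_mod_cast h2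
      obtain ⟨hxl, hxr⟩ := hx
      push_cast
      constructor <;> nlinarith
    have hHalfD : ∀ (s : ℝ) (k : ℕ), ∃ p : Polynomial ℝ,
        ∀ x ∈ Set.Ioo ((k:ℝ) * (h/2)) (((k:ℝ) + 1) * (h/2)), uD s x = p.eval x := by
      intro s k
      rcases Nat.even_or_odd k with ⟨i, hi⟩ | ⟨i, hi⟩
      · refine ⟨qDf s ((i:ℤ) - 1), fun x hx => hqDeq s _ x ?_⟩
        obtain ⟨hxl, hxr⟩ := hx
        subst hi
        push_cast at hxl hxr ⊢
        constructor <;> nlinarith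
      · refine ⟨qDf s (i:ℤ), fun x hx => hqDeq s _ x ?_⟩
        obtain ⟨hxl, hxr⟩ := hx
        subst hi
        push_cast at hxl hxr ⊢
        constructor <;> nlinarith
    -- cell inequalities
    have hcelllt : ∀ j : ℤ, (j:ℝ) * h < ((j:ℝ) + 1) * h := fun j => by nlinarith
    have hduallt : ∀ j : ℤ, ((j:ℝ) + 1/2) * h < ((j:ℝ) + 3/2) * h := fun j => by nlinarith
    -- scheme right-hand sides tested with the time-t polynomials
    set DC : ℤ → ℝ := fun j =>
      (1 / τ) * (∫ x in ((j : ℝ) * h)..((j + 1 : ℝ) * h), (uD t x - uC t x) * (qC j).eval x)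
        + (∫ x in ((j : ℝ) * h)..((j + 1 : ℝ) * h), uD t x * ((qC j).derivative.eval x))
        - uD t ((j + 1 : ℝ) * h) * (qC j).eval ((j + 1 : ℝ) * h)
        + uD t ((j : ℝ) * h) * (qC j).eval ((j : ℝ) * h) with hDC
    set DD : ℤ → ℝ := fun j =>
      (1 / τ) * (∫ x in (((j : ℝ) + 1 / 2) * h)..(((j : ℝ) + 3 / 2) * h),
          (uC t x - uD t x) * (qD j).eval x)
        + (∫ x in (((j : ℝ) + 1 / 2) * h)..(((j : ℝ) + 3 / 2) * h),
          uC t x * ((qD j).derivative.eval x))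
        - uC t (((j : ℝ) + 3 / 2) * h) * (qD j).eval (((j : ℝ) + 3 / 2) * h)
        + uC t (((j : ℝ) + 1 / 2) * h) * (qD j).eval (((j : ℝ) + 1 / 2) * h) with hDD
    have hFC : ∀ j : ℤ, HasDerivAt
        (fun s => ∫ x in ((j:ℝ) * h)..(((j:ℝ) + 1) * h), (uC s x)^2) (2 * DC j) t := by
      intro j
      exact cdg_cell_energy_deriv K (hcelllt j) uC t
        (fun s => ⟨qCf s j, hqCdeg s j, hqCeq s j⟩)
        (fun p =>
          (1 / τ) * (∫ x in ((j : ℝ) * h)..((j + 1 : ℝ) * h), (uD t x - uC t x) * p.eval x)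
            + (∫ x in ((j : ℝ) * h)..((j + 1 : ℝ) * h), uD t x * (p.derivative.eval x))
            - uD t ((j + 1 : ℝ) * h) * p.eval ((j + 1 : ℝ) * h)
            + uD t ((j : ℝ) * h) * p.eval ((j : ℝ) * h))
        (fun p hp => hschemeC j p hp) (qC j) (hqCdeg t j) (hqCeq t j)
    have hFD : ∀ j : ℤ, HasDerivAt
        (fun s => ∫ x in (((j:ℝ) + 1/2) * h)..(((j:ℝ) + 3/2) * h), (uD s x)^2)
        (2 * DD j) t := by
      intro j
      exact cdg_cell_energy_deriv K (hduallt j) uD t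
        (fun s => ⟨qDf s j, hqDdeg s j, hqDeq s j⟩)
        (fun p =>
          (1 / τ) * (∫ x in (((j : ℝ) + 1 / 2) * h)..(((j : ℝ) + 3 / 2) * h),
              (uC t x - uD t x) * p.eval x)
            + (∫ x in (((j : ℝ) + 1 / 2) * h)..(((j : ℝ) + 3 / 2) * h),
              uC t x * (p.derivative.eval x))
            - uC t (((j : ℝ) + 3 / 2) * h) * p.eval (((j : ℝ) + 3 / 2) * h)
            + uC t (((j : ℝ) + 1 / 2) * h) * p.eval (((j : ℝ) + 1 / 2) * h))
        (fun p hp => hschemeD j p hp) (qD j) (hqDdeg t j) (hqDeq t j)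
    -- periodic shift of the chosen polynomials
    have hqCshift : ∀ j : ℤ,
        (qC (j + N)).comp (Polynomial.X + Polynomial.C ((N:ℝ) * h)) = qC j := by
      intro j
      apply Polynomial.eq_of_infinite_eval_eq
      refine Set.Infinite.mono ?_ (Set.Ioo_infinite (hcelllt j))
      intro w hw
      obtain ⟨hw1, hw2⟩ := hw
      have hmem : w + (N:ℝ) * h ∈
          Set.Ioo (((j + N : ℤ) : ℝ) * h) ((((j + N : ℤ) : ℝ) + 1) * h) := by
        constructor <;> (push_cast; nlinarith)
      show Polynomial.eval w _ = Polynomial.eval w _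
      rw [Polynomial.eval_comp]
      simp only [Polynomial.eval_add, Polynomial.eval_X, Polynomial.eval_C]
      rw [← hqCeq t (j + N) _ hmem, hperC t w, hqCeq t j w ⟨hw1, hw2⟩]
    have hqDshift : ∀ j : ℤ,
        (qD (j + N)).comp (Polynomial.X + Polynomial.C ((N:ℝ) * h)) = qD j := by
      intro j
      apply Polynomial.eq_of_infinite_eval_eq
      refine Set.Infinite.mono ?_ (Set.Ioo_infinite (hduallt j))
      intro w hw
      obtain ⟨hw1, hw2⟩ := hw
      have hmem : w + (N:ℝ) * h ∈
          Set.Ioo ((((j + N : ℤ) : ℝ) + 1/2) * h) ((((j + N : ℤ) : ℝ) + 3/2) * h) := by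
        constructor <;> (push_cast; nlinarith)
      show Polynomial.eval w _ = Polynomial.eval w _
      rw [Polynomial.eval_comp]
      simp only [Polynomial.eval_add, Polynomial.eval_X, Polynomial.eval_C]
      rw [← hqDeq t (j + N) _ hmem, hperD t w, hqDeq t j w ⟨hw1, hw2⟩]
    -- the telescoping quantity
    set S : ℤ → ℝ := fun j =>
      (qD (j-1)).eval (((j:ℝ) + 1/2) * h) * (qC j).eval (((j:ℝ) + 1/2) * h)
        - ∫ x in ((j:ℝ) * h)..(((j:ℝ) + 1/2) * h),
            (qD (j-1)).derivative.eval x * (qC j).eval x with hS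
    -- telescoping identity on each cell
    have hABtel : ∀ j : ℤ, DC j + DD j
        = (1/τ) * (∫ x in ((j:ℝ) * h)..(((j:ℝ) + 1) * h),
              (uD t x - uC t x) * (qC j).eval x)
          + (1/τ) * (∫ x in (((j:ℝ) + 1/2) * h)..(((j:ℝ) + 3/2) * h),
              (uC t x - uD t x) * (qD j).eval x)
          + (S j - S (j + 1)) := by
      intro j
      have hle1 : (j:ℝ) * h ≤ ((j:ℝ) + 1/2) * h := by nlinarith
      have hle2 : ((j:ℝ) + 1/2) * h ≤ ((j:ℝ) + 1) * h := by nlinarith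
      have hle3 : ((j:ℝ) + 1) * h ≤ ((j:ℝ) + 3/2) * h := by nlinarith
      have hDon1 : ∀ x ∈ Set.Ioo ((j:ℝ)*h) (((j:ℝ)+1/2)*h), uD t x = (qD (j-1)).eval x := by
        intro x hx; obtain ⟨h1, h2⟩ := hx
        exact hqDeq t (j-1) x (by constructor <;> (push_cast; nlinarith))
      have hDon2 : ∀ x ∈ Set.Ioo (((j:ℝ)+1/2)*h) (((j:ℝ)+1)*h), uD t x = (qD j).eval x := by
        intro x hx; obtain ⟨h1, h2⟩ := hx
        exact hqDeq t j x (by constructor <;> nlinarith)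
      have hCon1 : ∀ x ∈ Set.Ioo (((j:ℝ)+1/2)*h) (((j:ℝ)+1)*h), uC t x = (qC j).eval x := by
        intro x hx; obtain ⟨h1, h2⟩ := hx
        exact hqCeq t j x (by constructor <;> nlinarith)
      have hCon2 : ∀ x ∈ Set.Ioo (((j:ℝ)+1)*h) (((j:ℝ)+3/2)*h), uC t x = (qC (j+1)).eval x := by
        intro x hx; obtain ⟨h1, h2⟩ := hx
        exact hqCeq t (j+1) x (by constructor <;> (push_cast; nlinarith))
      have hIA1 : IntervalIntegrable (fun x => uD t x * (qC j).derivative.eval x)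
          MeasureTheory.volume ((j:ℝ)*h) (((j:ℝ)+1/2)*h) :=
        cdg_integrable_of_Ioo hle1 ((qD (j-1)).continuous.mul ((qC j).derivative.continuous))
          (fun x hx => by rw [hDon1 x hx]; rfl)
      have hIA2 : IntervalIntegrable (fun x => uD t x * (qC j).derivative.eval x)
          MeasureTheory.volume (((j:ℝ)+1/2)*h) (((j:ℝ)+1)*h) :=
        cdg_integrable_of_Ioo hle2 ((qD j).continuous.mul ((qC j).derivative.continuous))
          (fun x hx => by rw [hDon2 x hx]; rfl)
      have hsplitA : (∫ x in ((j:ℝ)*h)..(((j:ℝ)+1)*h), uD t x * (qC j).derivative.eval x)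
          = (∫ x in ((j:ℝ)*h)..(((j:ℝ)+1/2)*h), uD t x * (qC j).derivative.eval x)
            + ∫ x in (((j:ℝ)+1/2)*h)..(((j:ℝ)+1)*h), uD t x * (qC j).derivative.eval x :=
        (intervalIntegral.integral_add_adjacent_intervals hIA1 hIA2).symm
      have hA1 : (∫ x in ((j:ℝ)*h)..(((j:ℝ)+1/2)*h), uD t x * (qC j).derivative.eval x)
          = ∫ x in ((j:ℝ)*h)..(((j:ℝ)+1/2)*h), (qD (j-1)).eval x * (qC j).derivative.eval x :=
        cdg_integral_congr_Ioo hle1 (fun x hx => by rw [hDon1 x hx])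
      have hA2 : (∫ x in (((j:ℝ)+1/2)*h)..(((j:ℝ)+1)*h), uD t x * (qC j).derivative.eval x)
          = ∫ x in (((j:ℝ)+1/2)*h)..(((j:ℝ)+1)*h), (qD j).eval x * (qC j).derivative.eval x :=
        cdg_integral_congr_Ioo hle2 (fun x hx => by rw [hDon2 x hx])
      have hibpA1 := cdg_polyIBP (qD (j-1)) (qC j) ((j:ℝ)*h) (((j:ℝ)+1/2)*h)
      have hibpA2 := cdg_polyIBP (qD j) (qC j) (((j:ℝ)+1/2)*h) (((j:ℝ)+1)*h)
      have hIB1 : IntervalIntegrable (fun x => uC t x * (qD j).derivative.eval x)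
          MeasureTheory.volume (((j:ℝ)+1/2)*h) (((j:ℝ)+1)*h) :=
        cdg_integrable_of_Ioo hle2 ((qC j).continuous.mul ((qD j).derivative.continuous))
          (fun x hx => by rw [hCon1 x hx]; rfl)
      have hIB2 : IntervalIntegrable (fun x => uC t x * (qD j).derivative.eval x)
          MeasureTheory.volume (((j:ℝ)+1)*h) (((j:ℝ)+3/2)*h) :=
        cdg_integrable_of_Ioo hle3 ((qC (j+1)).continuous.mul ((qD j).derivative.continuous))
          (fun x hx => by rw [hCon2 x hx]; rfl)
      have hsplitB : (∫ x in (((j:ℝ)+1/2)*h)..(((j:ℝ)+3/2)*h), uC t x * (qD j).derivative.eval x)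
          = (∫ x in (((j:ℝ)+1/2)*h)..(((j:ℝ)+1)*h), uC t x * (qD j).derivative.eval x)
            + ∫ x in (((j:ℝ)+1)*h)..(((j:ℝ)+3/2)*h), uC t x * (qD j).derivative.eval x :=
        (intervalIntegral.integral_add_adjacent_intervals hIB1 hIB2).symm
      have hB1 : (∫ x in (((j:ℝ)+1/2)*h)..(((j:ℝ)+1)*h), uC t x * (qD j).derivative.eval x)
          = ∫ x in (((j:ℝ)+1/2)*h)..(((j:ℝ)+1)*h), (qC j).eval x * (qD j).derivative.eval x :=
        cdg_integral_congr_Ioo hle2 (fun x hx => by rw [hCon1 x hx])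
      have hB2 : (∫ x in (((j:ℝ)+1)*h)..(((j:ℝ)+3/2)*h), uC t x * (qD j).derivative.eval x)
          = ∫ x in (((j:ℝ)+1)*h)..(((j:ℝ)+3/2)*h), (qC (j+1)).eval x * (qD j).derivative.eval x :=
        cdg_integral_congr_Ioo hle3 (fun x hx => by rw [hCon2 x hx])
      have hibpB2 := cdg_polyIBP (qC (j+1)) (qD j) (((j:ℝ)+1)*h) (((j:ℝ)+3/2)*h)
      have hibpT := cdg_polyIBP (qD j) (qC (j+1)) (((j:ℝ)+1)*h) (((j:ℝ)+3/2)*h)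
      have hcm1 : (∫ x in (((j:ℝ)+1/2)*h)..(((j:ℝ)+1)*h),
            (qC j).eval x * (qD j).derivative.eval x)
          = ∫ x in (((j:ℝ)+1/2)*h)..(((j:ℝ)+1)*h),
            (qD j).derivative.eval x * (qC j).eval x := cdg_comm _ _ _ _
      have hcm2 : (∫ x in (((j:ℝ)+1)*h)..(((j:ℝ)+3/2)*h),
            (qC (j+1)).derivative.eval x * (qD j).eval x)
          = ∫ x in (((j:ℝ)+1)*h)..(((j:ℝ)+3/2)*h),
            (qD j).eval x * (qC (j+1)).derivative.eval x := cdg_comm _ _ _ _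
      have pc1 : (qD j).eval (((j:ℝ)+3/2)*h) * (qC (j+1)).eval (((j:ℝ)+3/2)*h)
          = (qC (j+1)).eval (((j:ℝ)+3/2)*h) * (qD j).eval (((j:ℝ)+3/2)*h) := mul_comm _ _
      have pc2 : (qD j).eval (((j:ℝ)+1)*h) * (qC (j+1)).eval (((j:ℝ)+1)*h)
          = (qC (j+1)).eval (((j:ℝ)+1)*h) * (qD j).eval (((j:ℝ)+1)*h) := mul_comm _ _
      have pc3 : (qC j).eval (((j:ℝ)+1/2)*h) * (qD j).eval (((j:ℝ)+1/2)*h)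
          = (qD j).eval (((j:ℝ)+1/2)*h) * (qC j).eval (((j:ℝ)+1/2)*h) := mul_comm _ _
      have hbCy1 : uC t (((j:ℝ)+3/2)*h) = (qC (j+1)).eval (((j:ℝ)+3/2)*h) := by
        have h0 := huCy (j+1)
        have e : ((((j+1 : ℤ)):ℝ) + 1/2) * h = ((j:ℝ)+3/2)*h := by push_cast; ring
        rwa [e] at h0
      have hSj1 : S (j+1) = (qD j).eval (((j:ℝ)+3/2)*h) * (qC (j+1)).eval (((j:ℝ)+3/2)*h)
          - ∫ x in (((j:ℝ)+1)*h)..(((j:ℝ)+3/2)*h),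
              (qD j).derivative.eval x * (qC (j+1)).eval x := by
        simp only [hS]
        have hidx : j + 1 - 1 = j := by ring
        rw [hidx]
        have e1 : (((j+1 : ℤ)):ℝ) + 1/2 = (j:ℝ) + 3/2 := by push_cast; ring
        have e2 : (((j+1 : ℤ)):ℝ) = (j:ℝ) + 1 := by push_cast; ring
        rw [e1, e2]
      rw [hSj1]
      simp only [hDC, hDD, hS]
      rw [huDx1 j, huDx j, hbCy1, huCy j]
      linarith [hsplitA, hA1, hA2, hibpA1, hibpA2, hsplitB, hB1, hB2, hibpB2, hibpT,
        hcm1, hcm2, pc1, pc2, pc3]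
    -- periodicity of S
    have hSper : S (N:ℤ) = S 0 := by
      have hqCS : (qC (N:ℤ)).comp (Polynomial.X + Polynomial.C ((N:ℝ) * h)) = qC 0 := by
        have h0 := hqCshift 0; rwa [zero_add] at h0
      have hqDS : (qD ((N:ℤ)-1)).comp (Polynomial.X + Polynomial.C ((N:ℝ) * h)) = qD (-1) := by
        have h0 := hqDshift (-1)
        rwa [show (-1 : ℤ) + N = (N:ℤ) - 1 from by ring] at h0
      have hevC : ∀ w : ℝ, (qC (N:ℤ)).eval (w + (N:ℝ) * h) = (qC 0).eval w := by
        intro w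
        conv_rhs => rw [← hqCS]
        rw [Polynomial.eval_comp]
        simp
      have hevD : ∀ w : ℝ, (qD ((N:ℤ)-1)).eval (w + (N:ℝ) * h) = (qD (-1)).eval w := by
        intro w
        conv_rhs => rw [← hqDS]
        rw [Polynomial.eval_comp]
        simp
      have hevD' : ∀ w : ℝ, (qD ((N:ℤ)-1)).derivative.eval (w + (N:ℝ) * h)
          = (qD (-1)).derivative.eval w := by
        intro w
        conv_rhs => rw [← hqDS]
        rw [Polynomial.derivative_comp]
        simp [Polynomial.eval_comp]
      have hint : (∫ x in (((N:ℤ):ℝ) * h)..((((N:ℤ):ℝ) + 1/2) * h),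
            (qD ((N:ℤ)-1)).derivative.eval x * (qC (N:ℤ)).eval x)
          = ∫ x in ((0:ℝ) * h)..(((0:ℝ) + 1/2) * h),
            (qD (-1)).derivative.eval x * (qC 0).eval x := by
        have h1 := intervalIntegral.integral_comp_add_right
          (a := (0:ℝ) * h) (b := ((0:ℝ) + 1/2) * h)
          (fun x => (qD ((N:ℤ)-1)).derivative.eval x * (qC (N:ℤ)).eval x) ((N:ℝ) * h)
        rw [show (0:ℝ) * h + (N:ℝ) * h = ((N:ℤ):ℝ) * h from by push_cast; ring,
          show ((0:ℝ) + 1/2) * h + (N:ℝ) * h = (((N:ℤ):ℝ) + 1/2) * h from by push_cast; ring]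
          at h1
        rw [← h1]
        refine intervalIntegral.integral_congr fun x _ => ?_
        show (qD ((N:ℤ)-1)).derivative.eval (x + (N:ℝ) * h) * (qC (N:ℤ)).eval (x + (N:ℝ) * h)
          = _
        rw [hevD' x, hevC x]
      have hprod : (qD ((N:ℤ)-1)).eval ((((N:ℤ):ℝ) + 1/2) * h)
            * (qC (N:ℤ)).eval ((((N:ℤ):ℝ) + 1/2) * h)
          = (qD (-1)).eval (((0:ℝ) + 1/2) * h) * (qC 0).eval (((0:ℝ) + 1/2) * h) := by
        rw [show (((N:ℤ):ℝ) + 1/2) * h = ((0:ℝ) + 1/2) * h + (N:ℝ) * h from by push_cast; ring,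
          hevD _, hevC _]
      simp only [hS]
      rw [show ((0:ℤ) - 1 : ℤ) = -1 from by ring]
      rw [show ((0:ℤ):ℝ) = (0:ℝ) from by norm_num]
      rw [hprod, hint]
    -- ℕ-indexed versions of the cell derivatives
    have hFC' : ∀ k : ℕ, HasDerivAt
        (fun s => ∫ x in ((k:ℝ) * h)..(((k:ℝ) + 1) * h), (uC s x)^2) (2 * DC (k:ℤ)) t := by
      intro k
      have h0 := hFC (k:ℤ)
      push_cast at h0
      exact h0
    have hFD' : ∀ k : ℕ, HasDerivAt
        (fun s => ∫ x in (((k:ℝ) + 1/2) * h)..(((k:ℝ) + 3/2) * h), (uD s x)^2)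
        (2 * DD (k:ℤ)) t := by
      intro k
      have h0 := hFD (k:ℤ)
      push_cast at h0
      exact h0
    -- integrability over the whole period from half-cell polynomial pieces
    have hIntOn : ∀ F : ℝ → ℝ, (∀ k : ℕ, ∃ p : Polynomial ℝ,
        ∀ x ∈ Set.Ioo ((k:ℝ) * (h/2)) (((k:ℝ) + 1) * (h/2)), F x = p.eval x) →
        IntervalIntegrable F MeasureTheory.volume 0 ((N:ℝ) * h) := by
      intro F hF
      have h2 : ∀ k : ℕ, k < 2*N → IntervalIntegrable F MeasureTheory.volume
          ((k:ℝ) * (h/2)) (((k+1:ℕ):ℝ) * (h/2)) := by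
        intro k _
        obtain ⟨p, hp⟩ := hF k
        refine cdg_integrable_of_Ioo (by push_cast; nlinarith) p.continuous
          (fun x hx => hp x ?_)
        push_cast at hx ⊢
        exact hx
      have h3 := IntervalIntegrable.trans_iterate (a := fun k : ℕ => (k:ℝ) * (h/2))
        (n := 2*N) h2
      beta_reduce at h3
      rw [show ((0:ℕ):ℝ) * (h/2) = (0:ℝ) from by norm_num,
        show ((2*N:ℕ):ℝ) * (h/2) = (N:ℝ) * h from by push_cast; ring] at h3
      exact h3
    have hIntC2 : ∀ s, IntervalIntegrable (fun x => (uC s x)^2)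
        MeasureTheory.volume 0 ((N:ℝ) * h) := by
      intro s
      refine hIntOn _ (fun k => ?_)
      obtain ⟨p, hp⟩ := hHalfC s k
      exact ⟨p^2, fun x hx => by rw [hp x hx, Polynomial.eval_pow]⟩
    have hIntD2 : ∀ s, IntervalIntegrable (fun x => (uD s x)^2)
        MeasureTheory.volume 0 ((N:ℝ) * h) := by
      intro s
      refine hIntOn _ (fun k => ?_)
      obtain ⟨p, hp⟩ := hHalfD s k
      exact ⟨p^2, fun x hx => by rw [hp x hx, Polynomial.eval_pow]⟩
    have hIntf1 : IntervalIntegrable (fun x => (uD t x - uC t x) * uC t x)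
        MeasureTheory.volume 0 ((N:ℝ) * h) := by
      refine hIntOn _ (fun k => ?_)
      obtain ⟨p, hp⟩ := hHalfC t k
      obtain ⟨q, hq⟩ := hHalfD t k
      refine ⟨(q - p) * p, fun x hx => ?_⟩
      rw [Polynomial.eval_mul, Polynomial.eval_sub, ← hp x hx, ← hq x hx]
    have hIntf2 : IntervalIntegrable (fun x => (uC t x - uD t x) * uD t x)
        MeasureTheory.volume 0 ((N:ℝ) * h) := by
      refine hIntOn _ (fun k => ?_)
      obtain ⟨p, hp⟩ := hHalfC t k
      obtain ⟨q, hq⟩ := hHalfD t k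
      refine ⟨(p - q) * q, fun x hx => ?_⟩
      rw [Polynomial.eval_mul, Polynomial.eval_sub, ← hp x hx, ← hq x hx]
    -- splitting the energy integrals into cells
    have hsplitC : ∀ s : ℝ, (∫ x in (0:ℝ)..((N:ℝ) * h), (uC s x)^2)
        = ∑ k ∈ Finset.range N, ∫ x in ((k:ℝ) * h)..(((k:ℝ) + 1) * h), (uC s x)^2 := by
      intro s
      have hint : ∀ k : ℕ, k < N → IntervalIntegrable (fun x => (uC s x)^2)
          MeasureTheory.volume ((k:ℝ) * h) (((k+1:ℕ):ℝ) * h) := by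
        intro k _
        refine cdg_integrable_of_Ioo (by push_cast; nlinarith)
          (((qCf s (k:ℤ)).continuous).pow 2) (fun x hx => ?_)
        rw [hqCeq s (k:ℤ) x (by push_cast at hx ⊢; exact hx)]; rfl
      have h3 := intervalIntegral.sum_integral_adjacent_intervals
        (a := fun k : ℕ => (k:ℝ) * h) (n := N) hint
      beta_reduce at h3
      rw [show ((0:ℕ):ℝ) * h = (0:ℝ) from by norm_num] at h3
      rw [← h3]
      exact Finset.sum_congr rfl fun k _ => by push_cast; rfl
    have hsplitD : ∀ s : ℝ, (∫ x in (0:ℝ)..((N:ℝ) * h), (uD s x)^2)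
        = ∑ k ∈ Finset.range N,
            ∫ x in (((k:ℝ) + 1/2) * h)..(((k:ℝ) + 3/2) * h), (uD s x)^2 := by
      intro s
      have hper2 : Function.Periodic (fun x => (uD s x)^2) ((N:ℝ) * h) := by
        intro x
        simp only [hperD s x]
      have hshift := hper2.intervalIntegral_add_eq (h/2) 0
      rw [zero_add] at hshift
      have hint : ∀ k : ℕ, k < N → IntervalIntegrable (fun x => (uD s x)^2)
          MeasureTheory.volume (((k:ℝ) + 1/2) * h) ((((k+1:ℕ):ℝ) + 1/2) * h) := by
        intro k _
        refine cdg_integrable_of_Ioo (by push_cast; nlinarith)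
          (((qDf s (k:ℤ)).continuous).pow 2) (fun x hx => ?_)
        obtain ⟨h1, h2⟩ := hx
        push_cast at h1 h2
        rw [hqDeq s (k:ℤ) x (by constructor <;> (push_cast; nlinarith))]; rfl
      have h3 := intervalIntegral.sum_integral_adjacent_intervals
        (a := fun k : ℕ => ((k:ℝ) + 1/2) * h) (n := N) hint
      beta_reduce at h3
      rw [show (((0:ℕ):ℝ) + 1/2) * h = h/2 from by push_cast; ring,
        show (((N:ℕ):ℝ) + 1/2) * h = h/2 + (N:ℝ) * h from by push_cast; ring] at h3
      rw [← hshift, ← h3]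
      refine Finset.sum_congr rfl fun k _ => ?_
      rw [show (((k+1:ℕ):ℝ) + 1/2) * h = ((k:ℝ) + 3/2) * h from by push_cast; ring]
    -- sums of the dissipation terms
    have hICsum : (∑ k ∈ Finset.range N, ∫ x in (((k:ℤ):ℝ) * h)..((((k:ℤ):ℝ) + 1) * h),
          (uD t x - uC t x) * (qC (k:ℤ)).eval x)
        = ∫ x in (0:ℝ)..((N:ℝ) * h), (uD t x - uC t x) * uC t x := by
      have hcellint : ∀ k : ℕ, k < N →
          IntervalIntegrable (fun x => (uD t x - uC t x) * uC t x)
            MeasureTheory.volume ((k:ℝ) * h) (((k+1:ℕ):ℝ) * h) := by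
        intro k _
        have i1 : IntervalIntegrable (fun x => (uD t x - uC t x) * uC t x)
            MeasureTheory.volume ((k:ℝ) * h) (((k:ℝ) + 1/2) * h) := by
          refine cdg_integrable_of_Ioo (by nlinarith)
            (((qD ((k:ℤ)-1)).continuous.sub (qC (k:ℤ)).continuous).mul (qC (k:ℤ)).continuous)
            (fun x hx => ?_)
          obtain ⟨h1, h2⟩ := hx
          rw [hqDeq t ((k:ℤ)-1) x (by constructor <;> (push_cast; nlinarith)),
            hqCeq t (k:ℤ) x (by constructor <;> (push_cast; nlinarith))]; rfl
        have i2 : IntervalIntegrable (fun x => (uD t x - uC t x) * uC t x)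
            MeasureTheory.volume (((k:ℝ) + 1/2) * h) (((k:ℝ) + 1) * h) := by
          refine cdg_integrable_of_Ioo (by nlinarith)
            (((qD (k:ℤ)).continuous.sub (qC (k:ℤ)).continuous).mul (qC (k:ℤ)).continuous)
            (fun x hx => ?_)
          obtain ⟨h1, h2⟩ := hx
          rw [hqDeq t (k:ℤ) x (by constructor <;> (push_cast; nlinarith)),
            hqCeq t (k:ℤ) x (by constructor <;> (push_cast; nlinarith))]; rfl
        have i12 := i1.trans i2
        rw [show (((k+1:ℕ)):ℝ) * h = ((k:ℝ) + 1) * h from by push_cast; ring]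
        exact i12
      have h3 := intervalIntegral.sum_integral_adjacent_intervals
        (a := fun k : ℕ => (k:ℝ) * h) (n := N) hcellint
      beta_reduce at h3
      rw [show ((0:ℕ):ℝ) * h = (0:ℝ) from by norm_num] at h3
      rw [← h3]
      refine Finset.sum_congr rfl fun k hk => ?_
      have hcg : (∫ x in ((k:ℝ) * h)..(((k:ℝ) + 1) * h), (uD t x - uC t x) * (qC (k:ℤ)).eval x)
          = ∫ x in ((k:ℝ) * h)..(((k:ℝ) + 1) * h), (uD t x - uC t x) * uC t x :=
        cdg_integral_congr_Ioo (by nlinarith)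
          (fun x hx => by rw [hqCeq t (k:ℤ) x (by push_cast at hx ⊢; exact hx)])
      rw [show (((k:ℤ)):ℝ) = (k:ℝ) from by push_cast; ring, hcg,
        show (((k+1:ℕ)):ℝ) * h = ((k:ℝ) + 1) * h from by push_cast; ring]
    have hIDsum : (∑ k ∈ Finset.range N,
          ∫ x in ((((k:ℤ):ℝ) + 1/2) * h)..((((k:ℤ):ℝ) + 3/2) * h),
          (uC t x - uD t x) * (qD (k:ℤ)).eval x)
        = ∫ x in (0:ℝ)..((N:ℝ) * h), (uC t x - uD t x) * uD t x := by
      have hcellint : ∀ k : ℕ, k < N →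
          IntervalIntegrable (fun x => (uC t x - uD t x) * uD t x)
            MeasureTheory.volume (((k:ℝ) + 1/2) * h) ((((k+1:ℕ):ℝ) + 1/2) * h) := by
        intro k _
        have i1 : IntervalIntegrable (fun x => (uC t x - uD t x) * uD t x)
            MeasureTheory.volume (((k:ℝ) + 1/2) * h) (((k:ℝ) + 1) * h) := by
          refine cdg_integrable_of_Ioo (by nlinarith)
            (((qC (k:ℤ)).continuous.sub (qD (k:ℤ)).continuous).mul (qD (k:ℤ)).continuous)
            (fun x hx => ?_)
          obtain ⟨h1, h2⟩ := hx
          rw [hqCeq t (k:ℤ) x (by constructor <;> (push_cast; nlinarith)),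
            hqDeq t (k:ℤ) x (by constructor <;> (push_cast; nlinarith))]; rfl
        have i2 : IntervalIntegrable (fun x => (uC t x - uD t x) * uD t x)
            MeasureTheory.volume (((k:ℝ) + 1) * h) (((k:ℝ) + 3/2) * h) := by
          refine cdg_integrable_of_Ioo (by nlinarith)
            (((qC ((k:ℤ)+1)).continuous.sub (qD (k:ℤ)).continuous).mul (qD (k:ℤ)).continuous)
            (fun x hx => ?_)
          obtain ⟨h1, h2⟩ := hx
          rw [hqCeq t ((k:ℤ)+1) x (by constructor <;> (push_cast; nlinarith)),
            hqDeq t (k:ℤ) x (by constructor <;> (push_cast; nlinarith))]; rfl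
        have i12 := i1.trans i2
        rw [show ((((k+1:ℕ)):ℝ) + 1/2) * h = ((k:ℝ) + 3/2) * h from by push_cast; ring]
        exact i12
      have hperf : Function.Periodic (fun x => (uC t x - uD t x) * uD t x) ((N:ℝ) * h) := by
        intro x
        simp only [hperC t x, hperD t x]
      have hshift := hperf.intervalIntegral_add_eq (h/2) 0
      rw [zero_add] at hshift
      have h3 := intervalIntegral.sum_integral_adjacent_intervals
        (a := fun k : ℕ => ((k:ℝ) + 1/2) * h) (n := N) hcellint
      beta_reduce at h3
      rw [show (((0:ℕ):ℝ) + 1/2) * h = h/2 from by push_cast; ring,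
        show (((N:ℕ):ℝ) + 1/2) * h = h/2 + (N:ℝ) * h from by push_cast; ring] at h3
      rw [← hshift, ← h3]
      refine Finset.sum_congr rfl fun k hk => ?_
      have hcg : (∫ x in (((k:ℝ) + 1/2) * h)..(((k:ℝ) + 3/2) * h),
            (uC t x - uD t x) * (qD (k:ℤ)).eval x)
          = ∫ x in (((k:ℝ) + 1/2) * h)..(((k:ℝ) + 3/2) * h), (uC t x - uD t x) * uD t x := by
        refine cdg_integral_congr_Ioo (by nlinarith) (fun x hx => ?_)
        rw [hqDeq t (k:ℤ) x (by push_cast at hx ⊢; exact hx)]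
      rw [show (((k:ℤ)):ℝ) = (k:ℝ) from by push_cast; ring, hcg,
        show ((((k+1:ℕ)):ℝ) + 1/2) * h = ((k:ℝ) + 3/2) * h from by push_cast; ring]
    -- the two dissipation integrals combine to the full square
    have hneg : (∫ x in (0:ℝ)..((N:ℝ) * h), (uD t x - uC t x) * uC t x)
          + (∫ x in (0:ℝ)..((N:ℝ) * h), (uC t x - uD t x) * uD t x)
        = - ∫ x in (0:ℝ)..((N:ℝ) * h), (uC t x - uD t x)^2 := by
      rw [← intervalIntegral.integral_add hIntf1 hIntf2]
      rw [intervalIntegral.integral_congr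
        (g := fun x => -((uC t x - uD t x)^2)) (fun x _ => by ring)]
      rw [intervalIntegral.integral_neg]
    -- the full energy function equality
    have hEfun : (fun s => (1/2 : ℝ) * ∫ x in (0:ℝ)..((N:ℝ) * h), ((uC s x)^2 + (uD s x)^2))
        = fun s => (1/2 : ℝ) *
            ((∑ k ∈ Finset.range N, ∫ x in ((k:ℝ) * h)..(((k:ℝ) + 1) * h), (uC s x)^2)
            + ∑ k ∈ Finset.range N,
                ∫ x in (((k:ℝ) + 1/2) * h)..(((k:ℝ) + 3/2) * h), (uD s x)^2) := by
      funext s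
      rw [intervalIntegral.integral_add (hIntC2 s) (hIntD2 s), hsplitC s, hsplitD s]
    -- derivative of the cellwise sum
    have hDer : HasDerivAt
        (fun s => (1/2 : ℝ) *
            ((∑ k ∈ Finset.range N, ∫ x in ((k:ℝ) * h)..(((k:ℝ) + 1) * h), (uC s x)^2)
            + ∑ k ∈ Finset.range N,
                ∫ x in (((k:ℝ) + 1/2) * h)..(((k:ℝ) + 3/2) * h), (uD s x)^2))
        ((1/2 : ℝ) * ((∑ k ∈ Finset.range N, 2 * DC (k:ℤ))
            + ∑ k ∈ Finset.range N, 2 * DD (k:ℤ))) t :=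
      ((HasDerivAt.fun_sum fun k _ => hFC' k).add (HasDerivAt.fun_sum fun k _ => hFD' k)).const_mul _
    -- identify the derivative value
    have htel : ∑ k ∈ Finset.range N, (S (k:ℤ) - S ((k:ℤ)+1)) = S 0 - S (N:ℤ) := by
      have h0 := Finset.sum_range_sub' (fun k : ℕ => S (k:ℤ)) N
      beta_reduce at h0
      have he : ∀ k ∈ Finset.range N, S (k:ℤ) - S ((k:ℤ)+1) = S (k:ℤ) - S (((k+1:ℕ)):ℤ) := by
        intro k _
        norm_cast
      rw [Finset.sum_congr rfl he, h0]
      try norm_num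
    have hval : (1/2 : ℝ) * ((∑ k ∈ Finset.range N, 2 * DC (k:ℤ))
          + ∑ k ∈ Finset.range N, 2 * DD (k:ℤ))
        = -(1/τ) * ∫ x in (0:ℝ)..((N:ℝ) * h), (uC t x - uD t x)^2 := by
      have e1 : ∑ k ∈ Finset.range N, 2 * DC (k:ℤ)
          = 2 * ∑ k ∈ Finset.range N, DC (k:ℤ) := by rw [Finset.mul_sum]
      have e2 : ∑ k ∈ Finset.range N, 2 * DD (k:ℤ)
          = 2 * ∑ k ∈ Finset.range N, DD (k:ℤ) := by rw [Finset.mul_sum]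
      have hsum0 : (∑ k ∈ Finset.range N, DC (k:ℤ)) + ∑ k ∈ Finset.range N, DD (k:ℤ)
          = (1/τ) * (∑ k ∈ Finset.range N, ∫ x in (((k:ℤ):ℝ) * h)..((((k:ℤ):ℝ) + 1) * h),
                (uD t x - uC t x) * (qC (k:ℤ)).eval x)
            + (1/τ) * (∑ k ∈ Finset.range N,
                ∫ x in ((((k:ℤ):ℝ) + 1/2) * h)..((((k:ℤ):ℝ) + 3/2) * h),
                (uC t x - uD t x) * (qD (k:ℤ)).eval x)
            + (S 0 - S (N:ℤ)) := by
        rw [← Finset.sum_add_distrib]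
        rw [Finset.sum_congr rfl (fun k (_ : k ∈ Finset.range N) => hABtel (k:ℤ))]
        rw [Finset.sum_add_distrib, Finset.sum_add_distrib, htel,
          ← Finset.mul_sum, ← Finset.mul_sum]
      rw [e1, e2]
      have := hneg
      rw [← hICsum, ← hIDsum] at this
      linear_combination hsum0 + (1/τ) * this - hSper
    rw [hEfun]
    rw [← hval]
    exact hDer
  · -- nonpositivity
    have h1 : (0:ℝ) ≤ ∫ x in (0:ℝ)..(N * h), (uC t x - uD t x) ^ 2 :=
      intervalIntegral.integral_nonneg (by positivity) (fun x _ => sq_nonneg _)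
    have h2 : (0:ℝ) ≤ 1/τ := by positivity
    nlinarith
end

section
/- Let A, B, C be the 4×4 matrices A = (1/(4h))·[[0,0,5,−1],[0,0,−1,5],[0,0,0,0],[0,0,0,0]], B = (1/(4h))·[[0,0,−5,1],[0,0,1,−5],[5,−1,0,0],[−1,5,0,0]], C = (1/(4h))·[[0,0,0,0],[0,0,0,0],[−5,1,0,0],[1,−5,0,0]]. Then the eigenvalues of G(α) = A e^{−iα} + B + C e^{iα} are ±(1/h)√(2cos α − 2) and ±(3/(2h))√(2cos α − 2). -/
open Complex Matrix

theorem det_fin_four' (A : Matrix (Fin 4) (Fin 4) ℂ) :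
    A.det =
      A 0 0 * A 1 1 * A 2 2 * A 3 3 - A 0 0 * A 1 1 * A 2 3 * A 3 2 -
      A 0 0 * A 1 2 * A 2 1 * A 3 3 + A 0 0 * A 1 2 * A 2 3 * A 3 1 +
      A 0 0 * A 1 3 * A 2 1 * A 3 2 - A 0 0 * A 1 3 * A 2 2 * A 3 1 -
      A 0 1 * A 1 0 * A 2 2 * A 3 3 + A 0 1 * A 1 0 * A 2 3 * A 3 2 +
      A 0 1 * A 1 2 * A 2 0 * A 3 3 - A 0 1 * A 1 2 * A 2 3 * A 3 0 -
      A 0 1 * A 1 3 * A 2 0 * A 3 2 + A 0 1 * A 1 3 * A 2 2 * A 3 0 +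
      A 0 2 * A 1 0 * A 2 1 * A 3 3 - A 0 2 * A 1 0 * A 2 3 * A 3 1 -
      A 0 2 * A 1 1 * A 2 0 * A 3 3 + A 0 2 * A 1 1 * A 2 3 * A 3 0 +
      A 0 2 * A 1 3 * A 2 0 * A 3 1 - A 0 2 * A 1 3 * A 2 1 * A 3 0 -
      A 0 3 * A 1 0 * A 2 1 * A 3 2 + A 0 3 * A 1 0 * A 2 2 * A 3 1 +
      A 0 3 * A 1 1 * A 2 0 * A 3 2 - A 0 3 * A 1 1 * A 2 2 * A 3 0 -
      A 0 3 * A 1 2 * A 2 0 * A 3 1 + A 0 3 * A 1 2 * A 2 1 * A 3 0 := by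
  rw [Matrix.det_succ_row_zero]
  have h3 : (Fin.succ 2 : Fin 4) = 3 := rfl
  have hc : (Fin.castSucc 2 : Fin 4) = 2 := rfl
  simp [Fin.sum_univ_succ, Matrix.det_fin_three, Fin.succAbove,
    Matrix.submatrix_apply, h3, hc]
  ring

set_option maxHeartbeats 2000000 in
/-- The eigenvalues of the Fourier amplification matrix
`G(α) = A e^{-iα} + B + C e^{iα}` of the `P¹`-based central DG scheme
without numerical dissipation are `±(1/h)√(2cos α - 2)` and
`±(3/(2h))√(2cos α - 2)` (where `s` denotes a fixed branch of the
complex square root of `2cos α - 2`). -/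
theorem cdg_amplification_eigenvalues (h α : ℝ) (hh : 0 < h)
    (A B C : Matrix (Fin 4) (Fin 4) ℂ)
    (hA : A = (1 / (4 * h) : ℂ) •
      !![0, 0, 5, -1; 0, 0, -1, 5; 0, 0, 0, 0; 0, 0, 0, 0])
    (hB : B = (1 / (4 * h) : ℂ) •
      !![0, 0, -5, 1; 0, 0, 1, -5; 5, -1, 0, 0; -1, 5, 0, 0])
    (hC : C = (1 / (4 * h) : ℂ) •
      !![0, 0, 0, 0; 0, 0, 0, 0; -5, 1, 0, 0; 1, -5, 0, 0])
    (G : Matrix (Fin 4) (Fin 4) ℂ)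
    (hG : G = Complex.exp (-(α : ℂ) * Complex.I) • A + B + Complex.exp ((α : ℂ) * Complex.I) • C)
    (s : ℂ) (hs : s ^ 2 = 2 * Real.cos α - 2) :
    ∀ lam : ℂ, (G - lam • (1 : Matrix (Fin 4) (Fin 4) ℂ)).det = 0 ↔
      lam = s / h ∨ lam = -(s / h) ∨ lam = 3 * s / (2 * h) ∨ lam = -(3 * s / (2 * h)) := by
  intro lam
  have hh0 : (h : ℂ) ≠ 0 := by exact_mod_cast hh.ne'
  have hE : Complex.exp (-(α : ℂ) * Complex.I) * Complex.exp ((α : ℂ) * Complex.I) = 1 := by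
    rw [← Complex.exp_add]; ring_nf; exact Complex.exp_zero
  have hcos : Complex.exp ((α : ℂ) * Complex.I) + Complex.exp (-(α : ℂ) * Complex.I)
      = s ^ 2 + 2 := by
    have h1 : Complex.exp ((α:ℂ) * Complex.I) + Complex.exp (-(α:ℂ) * Complex.I)
        = 2 * Complex.cos α := by
      rw [Complex.cos]; ring_nf
    rw [h1, hs, ← Complex.ofReal_cos]; push_cast; ring
  set E := Complex.exp ((α : ℂ) * Complex.I) with hEdef
  set E' := Complex.exp (-(α : ℂ) * Complex.I) with hE'def
  subst hA hB hC hG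
  have hM : ((E' • ((1 / (4 * h) : ℂ) •
      !![0, 0, 5, -1; 0, 0, -1, 5; 0, 0, 0, 0; 0, 0, 0, 0])
      + (1 / (4 * h) : ℂ) • !![0, 0, -5, 1; 0, 0, 1, -5; 5, -1, 0, 0; -1, 5, 0, 0]
      + E • ((1 / (4 * h) : ℂ) •
      !![0, 0, 0, 0; 0, 0, 0, 0; -5, 1, 0, 0; 1, -5, 0, 0]))
      - lam • (1 : Matrix (Fin 4) (Fin 4) ℂ))
      = !![-lam, 0, 5*(E'-1)/(4*h), (1-E')/(4*h);
           0, -lam, (1-E')/(4*h), 5*(E'-1)/(4*h);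
           5*(1-E)/(4*h), (E-1)/(4*h), -lam, 0;
           (E-1)/(4*h), 5*(1-E)/(4*h), 0, -lam] := by
    ext i j
    fin_cases i <;> fin_cases j <;>
      simp [Matrix.sub_apply, Matrix.add_apply, Matrix.smul_apply, Matrix.one_apply,
        Matrix.vecHead, Matrix.vecTail] <;> ring
  have key : ((E' • ((1 / (4 * h) : ℂ) •
      !![0, 0, 5, -1; 0, 0, -1, 5; 0, 0, 0, 0; 0, 0, 0, 0])
      + (1 / (4 * h) : ℂ) • !![0, 0, -5, 1; 0, 0, 1, -5; 5, -1, 0, 0; -1, 5, 0, 0]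
      + E • ((1 / (4 * h) : ℂ) •
      !![0, 0, 0, 0; 0, 0, 0, 0; -5, 1, 0, 0; 1, -5, 0, 0]))
      - lam • (1 : Matrix (Fin 4) (Fin 4) ℂ)).det
      = (lam - s/h) * (lam + s/h) * (lam - 3*s/(2*h)) * (lam + 3*s/(2*h)) := by
    rw [hM, det_fin_four']
    simp only [Matrix.cons_val', Matrix.cons_val_zero, Matrix.cons_val_one, Matrix.head_cons,
      Matrix.empty_val', Matrix.cons_val_fin_one, Matrix.head_fin_const,
      Matrix.cons_val_two, Matrix.cons_val_three, Matrix.tail_cons, Matrix.of_apply]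
    linear_combination
      ((-13) * lam^2 / (4 * (h:ℂ)^2) + 9 * (s^2 + E + E' - E' * E - 1) / (4 * (h:ℂ)^4)) * hcos
      - ((-13) * lam^2 / (4 * (h:ℂ)^2) + 9 * (s^2 + E + E' - E' * E - 1) / (4 * (h:ℂ)^4)) * hE
  rw [key]
  constructor
  · intro h0
    rcases mul_eq_zero.1 h0 with h0 | h0
    · rcases mul_eq_zero.1 h0 with h0 | h0
      · rcases mul_eq_zero.1 h0 with h0 | h0
        · exact Or.inl (by linear_combination h0)
        · exact Or.inr (Or.inl (by linear_combination h0))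
      · exact Or.inr (Or.inr (Or.inl (by linear_combination h0)))
    · exact Or.inr (Or.inr (Or.inr (by linear_combination h0)))
  · rintro (rfl | rfl | rfl | rfl) <;> ring
end

section
/- For the amplification matrix G(α) of the dissipation-free P¹ central DG scheme, the vector r₁ = ( (e^{−iα}−1)/√(2cos α−2), (e^{−iα}−1)/√(2cos α−2), 1, 1 )ᵀ is an eigenvector of G(α) with eigenvalue (1/h)√(2cos α − 2), whenever 2cos α − 2 ≠ 0. -/
open Complex Matrix

/-- `r₁ = ((e^{-iα}-1)/s, (e^{-iα}-1)/s, 1, 1)ᵀ`, with `s` a square root of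
`2cos α - 2 ≠ 0`, is an eigenvector of the dissipation-free `P¹` central DG
amplification matrix `G(α)` with eigenvalue `s/h`. -/
theorem cdg_amplification_eigenvector (h α : ℝ) (hh : 0 < h)
    (A B C : Matrix (Fin 4) (Fin 4) ℂ)
    (hA : A = (1 / (4 * h) : ℂ) •
      !![0, 0, 5, -1; 0, 0, -1, 5; 0, 0, 0, 0; 0, 0, 0, 0])
    (hB : B = (1 / (4 * h) : ℂ) •
      !![0, 0, -5, 1; 0, 0, 1, -5; 5, -1, 0, 0; -1, 5, 0, 0])
    (hC : C = (1 / (4 * h) : ℂ) •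
      !![0, 0, 0, 0; 0, 0, 0, 0; -5, 1, 0, 0; 1, -5, 0, 0])
    (G : Matrix (Fin 4) (Fin 4) ℂ)
    (hG : G = Complex.exp (-(α : ℂ) * Complex.I) • A + B + Complex.exp ((α : ℂ) * Complex.I) • C)
    (s : ℂ) (hs : s ^ 2 = 2 * Real.cos α - 2)
    (hs0 : (2 : ℂ) * Real.cos α - 2 ≠ 0) :
    G.mulVec ![(Complex.exp (-(α : ℂ) * Complex.I) - 1) / s,
               (Complex.exp (-(α : ℂ) * Complex.I) - 1) / s, 1, 1]
      = (s / h) • ![(Complex.exp (-(α : ℂ) * Complex.I) - 1) / s,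
                    (Complex.exp (-(α : ℂ) * Complex.I) - 1) / s, 1, 1] := by
  subst hA hB hC hG
  have hs' : s ≠ 0 := by
    intro h0; apply hs0; rw [← hs, h0]; ring
  have hh' : (h : ℂ) ≠ 0 := by exact_mod_cast hh.ne'
  have hmul : Complex.exp (-(α : ℂ) * Complex.I) * Complex.exp ((α : ℂ) * Complex.I) = 1 := by
    rw [← Complex.exp_add]; ring_nf; exact Complex.exp_zero
  have hs2 : s ^ 2 = Complex.exp ((α : ℂ) * Complex.I)
      + Complex.exp (-(α : ℂ) * Complex.I) - 2 := by
    rw [hs, Complex.ofReal_cos, Complex.cos, neg_mul]; ring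
  simp only [neg_mul] at hmul hs2
  funext i
  fin_cases i <;>
    simp only [Matrix.mulVec, dotProduct, Fin.sum_univ_four, Matrix.smul_apply,
      Matrix.add_apply, Matrix.cons_val', Matrix.cons_val_zero, Matrix.cons_val_one,
      Matrix.head_cons, Matrix.empty_val', Matrix.cons_val_fin_one, Matrix.head_fin_const,
      Matrix.cons_val_two, Matrix.cons_val_three, Matrix.tail_cons, Matrix.of_apply,
      Pi.smul_apply, smul_eq_mul, Fin.reduceFinMk, Fin.isValue, neg_mul] <;>
    field_simp
  case _ => ring
  case _ => ring
  case _ => linear_combination (-4 : ℂ) * hs2 + (-4 : ℂ) * hmul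
  case _ => linear_combination (-4 : ℂ) * hs2 + (-4 : ℂ) * hmul
end

section
/- Let λ₂(α) = (1/τ)(−2 − μαi − (4/3)μ²α²) + O(α³) with τ, μ > 0. Then for the forward Euler amplification factor with Δt = τ, |1 + τλ₂| = 1 + (11/6)μ²α² + O(α³); in particular, treating the expansion exactly as g(α) = 1 + τλ₂ where λ₂ = (1/τ)(−2 − μαi − (4/3)μ²α²), one has |g(α)|² = 1 + (11/3)μ²α² + O(α³) as α → 0, hence |g(α)| > 1 for all sufficiently small α ≠ 0. -/
open Filter Asymptotics

/-- Forward Euler amplification factor of the new `P¹`-based central DG scheme: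
with `g(α) = 1 + (-2 - iμα - (4/3)μ²α²)`, one has
`|g(α)|² = 1 + (11/3)μ²α² + O(α³)` as `α → 0`, hence `|g(α)| > 1`
for all sufficiently small `α ≠ 0` (instability). -/
theorem new_cdg_euler_unstable (μ : ℝ) (hμ : 0 < μ) :
    let g : ℝ → ℂ := fun α =>
      1 + (-2 - μ * α * Complex.I - (4 / 3) * μ ^ 2 * α ^ 2)
    ((fun α : ℝ => ‖g α‖ ^ 2 - (1 + (11 / 3) * μ ^ 2 * α ^ 2))
      =O[nhds (0 : ℝ)] fun α : ℝ => |α| ^ 3) ∧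
    (∀ᶠ α in nhdsWithin (0 : ℝ) {0}ᶜ, 1 < ‖g α‖) := by
  intro g
  have habs : ∀ α : ℝ, (‖g α‖) ^ 2
      = 1 + (11 / 3) * μ ^ 2 * α ^ 2 + (16 / 9) * μ ^ 4 * α ^ 4 := by
    intro α
    rw [← Complex.normSq_eq_norm_sq]
    simp only [g, Complex.normSq_apply]
    simp [Complex.add_re, Complex.add_im, Complex.sub_re, Complex.sub_im,
      Complex.mul_re, Complex.mul_im, Complex.I_re, Complex.I_im,
      Complex.ofReal_re, Complex.ofReal_im, ← Complex.ofReal_pow]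
    ring
  constructor
  · have heq : (fun α : ℝ => (‖g α‖) ^ 2 - (1 + (11 / 3) * μ ^ 2 * α ^ 2))
        = fun α : ℝ => (16 / 9) * μ ^ 4 * α ^ 4 := by
      funext α; rw [habs]; ring
    rw [heq]
    have h1 : (fun α : ℝ => α ^ 4) =O[nhds (0 : ℝ)] fun α : ℝ => |α| ^ 3 := by
      rw [isBigO_iff]
      refine ⟨1, ?_⟩
      have : ∀ᶠ α : ℝ in nhds 0, |α| ≤ 1 := by
        have := Metric.ball_mem_nhds (0 : ℝ) one_pos
        filter_upwards [this] with α hα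
        rw [Metric.mem_ball, dist_zero_right, Real.norm_eq_abs] at hα
        exact le_of_lt hα
      filter_upwards [this] with α hα
      have h3 : |α| ^ 4 ≤ |α| ^ 3 := by
        calc |α| ^ 4 = |α| ^ 3 * |α| := by ring
        _ ≤ |α| ^ 3 * 1 := by
            exact mul_le_mul_of_nonneg_left hα (by positivity)
        _ = |α| ^ 3 := by ring
      simpa [norm_pow, Real.norm_eq_abs, abs_abs] using h3
    exact (h1.const_mul_left _)
  · filter_upwards [self_mem_nhdsWithin] with α (hα : α ≠ 0)
    have h1 : (1 : ℝ) < (‖g α‖) ^ 2 := by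
      rw [habs]
      have : 0 < (11 / 3) * μ ^ 2 * α ^ 2 + (16 / 9) * μ ^ 4 * α ^ 4 := by positivity
      linarith
    nlinarith [norm_nonneg (g α)]
end

section
/- Let λ = (1/τ)(−2 − μαi − (4/3)μ²α²) with τ, μ > 0 and α real, and let g(α) = 1 + τλ + (τλ)²/2 be the second-order Runge–Kutta amplification factor. Then |g(α)|² = 1 + (8/3)μ²α² + O(α³) as α → 0; in particular |g(α)| > 1 for all sufficiently small α ≠ 0, so the scheme is unstable for every μ > 0. -/
open Filter Asymptotics

/-- Second-order Runge–Kutta amplification factor of the new `P¹`-based central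
DG scheme: with `τλ = z = -2 - iμα - (4/3)μ²α²` and `g = 1 + z + z²/2`, one has
`|g(α)|² = 1 + (8/3)μ²α² + O(α³)` as `α → 0`; in particular `|g(α)| > 1` for
all sufficiently small `α ≠ 0`, so the scheme is unstable for every `μ > 0`. -/
theorem new_cdg_rk2_unstable (μ : ℝ) (hμ : 0 < μ) :
    let z : ℝ → ℂ := fun α => -2 - μ * α * Complex.I - (4 / 3) * μ ^ 2 * α ^ 2
    let g : ℝ → ℂ := fun α => 1 + z α + (z α) ^ 2 / 2
    ((fun α : ℝ => ‖g α‖ ^ 2 - (1 + (8 / 3) * μ ^ 2 * α ^ 2))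
      =O[nhds (0 : ℝ)] fun α : ℝ => |α| ^ 3) ∧
    (∀ᶠ α in nhdsWithin (0 : ℝ) {0}ᶜ, 1 < ‖g α‖) := by
  intro z g
  have habs : ∀ α : ℝ, ‖g α‖ ^ 2 =
      (1 + 5/6*μ^2*α^2 + 8/9*μ^4*α^4) ^ 2 + (μ*α + 4/3*μ^3*α^3) ^ 2 := by
    intro α
    have hg : g α = ((1 + 5/6*μ^2*α^2 + 8/9*μ^4*α^4 : ℝ) : ℂ)
        + ((μ*α + 4/3*μ^3*α^3 : ℝ) : ℂ) * Complex.I := by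
      show (1 : ℂ) + _ + _ = _
      push_cast
      linear_combination ((μ:ℂ)^2*(α:ℂ)^2/2) * Complex.I_sq
    rw [hg, Complex.sq_norm, Complex.normSq_add_mul_I]
  have key : ∀ α : ℝ, ‖g α‖ ^ 2 - (1 + (8/3)*μ^2*α^2)
      = α^4 * (185/36*μ^4 + 88/27*μ^6*α^2 + 64/81*μ^8*α^4) := by
    intro α; rw [habs]; ring
  constructor
  · rw [Asymptotics.isBigO_iff]
    refine ⟨185/36*μ^4 + 88/27*μ^6 + 64/81*μ^8, ?_⟩
    have h1 : ∀ᶠ α : ℝ in nhds 0, |α| ≤ 1 := by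
      have := Metric.ball_mem_nhds (0:ℝ) one_pos
      filter_upwards [this] with α hα
      simpa [Real.dist_eq] using le_of_lt (by simpa [Real.dist_eq] using hα)
    filter_upwards [h1] with α hα
    rw [key]
    have hα2 : α^2 ≤ 1 := by nlinarith [abs_nonneg α, sq_abs α]
    have hα4 : α^4 ≤ 1 := by nlinarith [sq_nonneg α, sq_nonneg (α^2)]
    have habs3 : ‖|α|^3‖ = |α|^3 := by
      rw [Real.norm_eq_abs, abs_of_nonneg (by positivity)]
    rw [habs3, Real.norm_eq_abs]
    have h4 : |α|^4 ≤ |α|^3 := by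
      nlinarith [abs_nonneg α, pow_nonneg (abs_nonneg α) 3]
    have hQ : 0 ≤ 185/36*μ^4 + 88/27*μ^6*α^2 + 64/81*μ^8*α^4 := by positivity
    rw [abs_mul, abs_of_nonneg hQ]
    have : |α^4| = |α|^4 := by rw [abs_pow]
    rw [this]
    have hQle : 185/36*μ^4 + 88/27*μ^6*α^2 + 64/81*μ^8*α^4
        ≤ 185/36*μ^4 + 88/27*μ^6 + 64/81*μ^8 := by nlinarith [pow_pos hμ 6, pow_pos hμ 8]
    calc |α|^4 * (185/36*μ^4 + 88/27*μ^6*α^2 + 64/81*μ^8*α^4)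
        ≤ |α|^3 * (185/36*μ^4 + 88/27*μ^6 + 64/81*μ^8) := by
          apply mul_le_mul h4 hQle hQ (by positivity)
      _ = (185/36*μ^4 + 88/27*μ^6 + 64/81*μ^8) * |α|^3 := by ring
  · refine Filter.eventually_of_mem self_mem_nhdsWithin fun α hα => ?_
    have hα0 : α ≠ 0 := hα
    have hsq : 1 < ‖g α‖ ^ 2 := by
      have := key α
      have h4 : 0 < α^4 := by positivity
      nlinarith [sq_nonneg α, pow_pos hμ 4, pow_pos hμ 2, mul_pos h4 (by positivity : (0:ℝ) < 185/36*μ^4 + 88/27*μ^6*α^2 + 64/81*μ^8*α^4)]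
    nlinarith [norm_nonneg (g α)]
end

section
/- Let z = −2 − iμα − (4/3)μ²α² for real α and μ > 0. Then |1 + z + z²/2|² = 1 + (8/3)μ²α² + O(α³) as α → 0. -/
open Filter Asymptotics

/-- With `z = -2 - iμα - (4/3)μ²α²`, the modulus squared of the RK2
amplification factor satisfies `|1 + z + z²/2|² = 1 + (8/3)μ²α² + O(α³)`
as `α → 0`. -/
theorem rk2_amplification_modulus_expansion (μ : ℝ) (hμ : 0 < μ) :
    let z : ℝ → ℂ := fun α => -2 - Complex.I * (μ * α) - (4 / 3) * μ ^ 2 * α ^ 2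
    (fun α : ℝ =>
        (‖1 + z α + (z α) ^ 2 / 2‖) ^ 2 - (1 + (8 / 3) * μ ^ 2 * α ^ 2))
      =O[nhds (0 : ℝ)] fun α : ℝ => |α| ^ 3 := by
  intro z
  have key : ∀ α : ℝ,
      (‖1 + z α + (z α) ^ 2 / 2‖) ^ 2 - (1 + (8 / 3) * μ ^ 2 * α ^ 2)
        = μ ^ 4 * α ^ 4 * (185 / 36 + 88 / 27 * μ ^ 2 * α ^ 2 + 64 / 81 * μ ^ 4 * α ^ 4) := by
    intro α
    rw [Complex.sq_norm]
    simp only [z, Complex.normSq_apply]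
    simp [Complex.add_re, Complex.add_im, Complex.sub_re, Complex.sub_im,
      Complex.mul_re, Complex.mul_im, Complex.div_re, Complex.div_im,
      Complex.normSq_apply, Complex.I_re, Complex.I_im,
      Complex.ofReal_re, Complex.ofReal_im, pow_two]
    ring
  apply IsBigO.of_bound (μ ^ 4 * (185 / 36 + 88 / 27 * μ ^ 2 + 64 / 81 * μ ^ 4))
  filter_upwards [Metric.ball_mem_nhds (0 : ℝ) one_pos] with α hα
  rw [key]
  have hα1 : |α| ≤ 1 := by
    rw [Metric.mem_ball, Real.dist_eq, sub_zero] at hα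
    exact hα.le
  have h0 : (0:ℝ) ≤ |α| := abs_nonneg α
  have hpow : ∀ n : ℕ, |α| ^ (n + 3) ≤ |α| ^ 3 := fun n =>
    pow_le_pow_of_le_one h0 hα1 (by omega)
  have hμ2 : (0:ℝ) ≤ μ ^ 2 := sq_nonneg μ
  have hμ4 : (0:ℝ) ≤ μ ^ 4 := by positivity
  rw [Real.norm_eq_abs, abs_mul, abs_mul, abs_pow, abs_pow, abs_of_pos hμ]
  have habs : |185 / 36 + 88 / 27 * μ ^ 2 * α ^ 2 + 64 / 81 * μ ^ 4 * α ^ 4|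
      ≤ 185 / 36 + 88 / 27 * μ ^ 2 + 64 / 81 * μ ^ 4 := by
    rw [abs_of_nonneg (by positivity)]
    have h2 : α ^ 2 ≤ 1 := by
      nlinarith [sq_abs α, (pow_le_one₀ h0 hα1 : |α| ^ 2 ≤ 1)]
    have h4 : α ^ 4 ≤ 1 := by nlinarith [sq_nonneg α, sq_nonneg (α^2)]
    nlinarith [sq_nonneg μ, sq_nonneg (μ^2)]
  calc μ ^ 4 * |α| ^ 4 * |185 / 36 + 88 / 27 * μ ^ 2 * α ^ 2 + 64 / 81 * μ ^ 4 * α ^ 4|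
      ≤ μ ^ 4 * |α| ^ 3 * (185 / 36 + 88 / 27 * μ ^ 2 + 64 / 81 * μ ^ 4) := by
        have := hpow 1
        have habs' := habs
        have h1 : μ ^ 4 * |α| ^ 4 ≤ μ ^ 4 * |α| ^ 3 :=
          mul_le_mul_of_nonneg_left (hpow 1) hμ4
        have h2 : (0:ℝ) ≤ μ ^ 4 * |α| ^ 4 := by positivity
        exact mul_le_mul h1 habs (abs_nonneg _) (by positivity)
    _ = μ ^ 4 * (185 / 36 + 88 / 27 * μ ^ 2 + 64 / 81 * μ ^ 4) * ‖|α| ^ 3‖ := by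
        rw [Real.norm_eq_abs, abs_pow, abs_abs]; ring
end
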